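/- Let R ⊆ V with vol(R) ≤ vol(V\R), δ ≥ 0, ε = f(R)+δ where f(R)=vol(R)/vol(V\R). Suppose S* minimizes φ̄_R(S) = ∂S/(vol(R∩S) − ε·vol((V\R)∩S)) over all S with positive denominator, and suppose C ⊆ R has vol(C) > 0 and vol(C) ≤ vol(V\C). Then φ(S*) ≤ φ̄_R(S*) ≤ φ(C). -/
import Mathlib


open Finset

variable {V : Type*} [Fintype V] [DecidableEq V]

/-- volume of a vertex set: sum of degrees -/
def vol (G : SimpleGraph V) [DecidableRel G.Adj] (S : Finset V) : ℝ :=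
  ∑ v ∈ S, (G.degree v : ℝ)

/-- number of edges between two (disjoint) vertex sets -/
def cutB (G : SimpleGraph V) [DecidableRel G.Adj] (A B : Finset V) : ℝ :=
  (((A ×ˢ B).filter fun p => G.Adj p.1 p.2).card : ℝ)

/-- boundary of S: number of edges from S to its complement -/
def bdry (G : SimpleGraph V) [DecidableRel G.Adj] (S : Finset V) : ℝ :=
  cutB G S Sᶜ

lemma vol_nonneg (G : SimpleGraph V) [DecidableRel G.Adj] (S : Finset V) :
    0 ≤ vol G S :=
  Finset.sum_nonneg fun _ _ => by positivity

lemma vol_mono (G : SimpleGraph V) [DecidableRel G.Adj] {S T : Finset V} (h : S ⊆ T) :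
    vol G S ≤ vol G T :=
  Finset.sum_le_sum_of_subset_of_nonneg h fun _ _ _ => by positivity

lemma vol_split (G : SimpleGraph V) [DecidableRel G.Adj] (R S : Finset V) :
    vol G (R ∩ S) + vol G (Rᶜ ∩ S) = vol G S := by
  have h1 : R ∩ S = S ∩ R := Finset.inter_comm _ _
  have h2 : Rᶜ ∩ S = S \ R := by
    ext x; simp [and_comm]
  rw [vol, vol, vol, h1, h2]
  exact Finset.sum_inter_add_sum_sdiff _ _ _

lemma bdry_nonneg (G : SimpleGraph V) [DecidableRel G.Adj] (S : Finset V) :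
    0 ≤ bdry G S := by
  unfold bdry cutB; positivity

theorem minimizer_conductance_le_subset (G : SimpleGraph V) [DecidableRel G.Adj]
    (R C Sstar : Finset V) (δ ε : ℝ) (hδ : 0 ≤ δ) (hR : vol G R ≤ vol G Rᶜ)
    (hε : ε = vol G R / vol G Rᶜ + δ)
    (hdenom : 0 < vol G (R ∩ Sstar) - ε * vol G (Rᶜ ∩ Sstar))
    (hmin : ∀ S : Finset V,
      0 < vol G (R ∩ S) - ε * vol G (Rᶜ ∩ S) →
      bdry G Sstar / (vol G (R ∩ Sstar) - ε * vol G (Rᶜ ∩ Sstar))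
        ≤ bdry G S / (vol G (R ∩ S) - ε * vol G (Rᶜ ∩ S)))
    (hC : C ⊆ R) (hvC : 0 < vol G C) (hvCc : vol G C ≤ vol G Cᶜ) :
    bdry G Sstar / min (vol G Sstar) (vol G Sstarᶜ)
        ≤ bdry G Sstar / (vol G (R ∩ Sstar) - ε * vol G (Rᶜ ∩ Sstar)) ∧
    bdry G Sstar / (vol G (R ∩ Sstar) - ε * vol G (Rᶜ ∩ Sstar))
        ≤ bdry G C / min (vol G C) (vol G Cᶜ) := by
  have hvRc : 0 ≤ vol G Rᶜ := vol_nonneg G _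
  have hvR : 0 ≤ vol G R := vol_nonneg G _
  have hε0 : 0 ≤ ε := by
    rw [hε]; positivity
  -- vol Rᶜ > 0
  have hRcpos : 0 < vol G Rᶜ := by
    rcases lt_or_eq_of_le hvRc with h | h
    · exact h
    · exfalso
      have hR0 : vol G R = 0 := le_antisymm (h ▸ hR) hvR
      have h1 : vol G (R ∩ Sstar) ≤ 0 := hR0 ▸ vol_mono G (Finset.inter_subset_left)
      have h2 : 0 ≤ ε * vol G (Rᶜ ∩ Sstar) := mul_nonneg hε0 (vol_nonneg G _)
      linarith
  have hεR : vol G R ≤ ε * vol G Rᶜ := by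
    rw [hε, add_mul, div_mul_cancel₀ _ hRcpos.ne']
    nlinarith [vol_nonneg G Rᶜ]
  -- denom ≤ vol Sstar
  have hd1 : vol G (R ∩ Sstar) - ε * vol G (Rᶜ ∩ Sstar) ≤ vol G Sstar := by
    have := vol_split G R Sstar
    have h2 : 0 ≤ ε * vol G (Rᶜ ∩ Sstar) := mul_nonneg hε0 (vol_nonneg G _)
    linarith [vol_nonneg G (Rᶜ ∩ Sstar)]
  -- denom ≤ vol Sstarᶜ
  have hd2 : vol G (R ∩ Sstar) - ε * vol G (Rᶜ ∩ Sstar) ≤ vol G Sstarᶜ := by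
    have hsplitR : vol G (Sstar ∩ R) + vol G (Sstarᶜ ∩ R) = vol G R := vol_split G Sstar R
    have hsplitRc : vol G (Sstar ∩ Rᶜ) + vol G (Sstarᶜ ∩ Rᶜ) = vol G Rᶜ := vol_split G Sstar Rᶜ
    have hsplitSc : vol G (R ∩ Sstarᶜ) + vol G (Rᶜ ∩ Sstarᶜ) = vol G Sstarᶜ := vol_split G R Sstarᶜ
    have e1 : vol G (Sstar ∩ R) = vol G (R ∩ Sstar) := by rw [Finset.inter_comm]
    have e2 : vol G (Sstar ∩ Rᶜ) = vol G (Rᶜ ∩ Sstar) := by rw [Finset.inter_comm]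
    have e3 : vol G (Sstarᶜ ∩ R) = vol G (R ∩ Sstarᶜ) := by rw [Finset.inter_comm]
    have e4 : vol G (Sstarᶜ ∩ Rᶜ) = vol G (Rᶜ ∩ Sstarᶜ) := by rw [Finset.inter_comm]
    -- ε₀ := vol R / vol Rᶜ ≤ 1, and ε ≥ ε₀
    have hε0le : vol G R / vol G Rᶜ ≤ 1 := (div_le_one hRcpos).mpr hR
    have hεge : vol G R / vol G Rᶜ ≤ ε := by rw [hε]; linarith
    have key : vol G (R ∩ Sstar) - (vol G R / vol G Rᶜ) * vol G (Rᶜ ∩ Sstar)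
        ≤ vol G (Rᶜ ∩ Sstarᶜ) := by
      have hRrw : vol G R = (vol G R / vol G Rᶜ) * vol G Rᶜ := by
        field_simp
      set t := vol G R / vol G Rᶜ with ht
      have htnn : 0 ≤ t := div_nonneg hvR hvRc
      -- vol(R∩S) = t * vol Rᶜ - vol(R∩Sᶜ) = t*(vol(Rᶜ∩S)+vol(Rᶜ∩Sᶜ)) - vol(R∩Sᶜ)
      nlinarith [vol_nonneg G (R ∩ Sstarᶜ), vol_nonneg G (Rᶜ ∩ Sstarᶜ)]
    have hmono : ε * vol G (Rᶜ ∩ Sstar) ≥ (vol G R / vol G Rᶜ) * vol G (Rᶜ ∩ Sstar) :=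
      mul_le_mul_of_nonneg_right hεge (vol_nonneg G _)
    linarith [vol_nonneg G (R ∩ Sstarᶜ)]
  have hdmin : vol G (R ∩ Sstar) - ε * vol G (Rᶜ ∩ Sstar)
      ≤ min (vol G Sstar) (vol G Sstarᶜ) := le_min hd1 hd2
  constructor
  · exact div_le_div_of_nonneg_left (bdry_nonneg G Sstar) hdenom hdmin
  · have hRC : R ∩ C = C := Finset.inter_eq_right.mpr hC
    have hRcC : Rᶜ ∩ C = ∅ := by
      ext x
      simp only [Finset.mem_inter, Finset.mem_compl, Finset.notMem_empty, iff_false]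
      rintro ⟨hx, hxC⟩
      exact hx (hC hxC)
    have hvol0 : vol G (Rᶜ ∩ C) = 0 := by rw [hRcC]; simp [vol]
    have hden : 0 < vol G (R ∩ C) - ε * vol G (Rᶜ ∩ C) := by
      rw [hRC, hvol0]; simpa using hvC
    have := hmin C hden
    rw [hRC, hvol0] at this
    rw [min_eq_left hvCc]
    simpa using this
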